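/- Define k : ℝ → ℝ by k(u) = 1/2 + (1 + e^{−4u})^{−1}. Then k(0) = 1, k'(0) = 1, k''(0) = 0, and for every u ∈ ℝ one has |k(u) − 1| ≤ min(1, |u|) and |k(u) − 1 − u| ≤ 2 |u| min(1, u²). -/

import Mathlib

/-- The perturbation function `k(u) = 1/2 + (1 + e^{−4u})⁻¹`. -/
noncomputable def kFun (u : ℝ) : ℝ := 1 / 2 + (1 + Real.exp (-4 * u))⁻¹

lemma kFun_sub_one (u : ℝ) : kFun u - 1 = Real.sinh (2*u) / (2 * Real.cosh (2*u)) := by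
  have hc := Real.cosh_pos (2*u)
  have h1 : (0:ℝ) < 1 + Real.exp (-4*u) := by positivity
  have he : Real.exp (-4*u) = Real.exp (-(2*u)) * Real.exp (-(2*u)) := by
    rw [← Real.exp_add]; ring_nf
  have hmul : Real.exp (2*u) * Real.exp (-(2*u)) = 1 := by
    rw [← Real.exp_add]; simp
  rw [Real.cosh_eq] at hc ⊢
  rw [Real.sinh_eq, kFun]
  rw [he] at h1 ⊢
  field_simp
  nlinarith [Real.exp_pos (2*u), Real.exp_pos (-(2*u))]

lemma nonneg_of_deriv (F F' : ℝ → ℝ) (hF : ∀ x, HasDerivAt F (F' x) x)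
    (h0 : F 0 = 0) (hpos : ∀ x, 0 ≤ x → 0 ≤ F' x) {x : ℝ} (hx : 0 ≤ x) : 0 ≤ F x := by
  have hmono : MonotoneOn F (Set.Ici 0) := by
    apply monotoneOn_of_deriv_nonneg (convex_Ici 0)
    · exact (Continuous.continuousOn (by
        have : Differentiable ℝ F := fun y => (hF y).differentiableAt
        exact this.continuous))
    · intro y _; exact (hF y).differentiableAt.differentiableWithinAt
    · intro y hy
      rw [interior_Ici] at hy
      rw [(hF y).deriv]
      exact hpos y (le_of_lt hy)
  have := hmono (Set.self_mem_Ici) (Set.mem_Ici.mpr hx) hx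
  linarith [h0 ▸ this]

lemma sinh_le_mul_cosh {x : ℝ} (hx : 0 ≤ x) : Real.sinh x ≤ x * Real.cosh x := by
  have h := nonneg_of_deriv (fun x => x * Real.cosh x - Real.sinh x)
    (fun x => x * Real.sinh x)
    (fun y => by
      have h1 : HasDerivAt (fun x : ℝ => x * Real.cosh x - Real.sinh x)
          ((1 * Real.cosh y + y * Real.sinh y) - Real.cosh y) y :=
        ((hasDerivAt_id y).mul (Real.hasDerivAt_cosh y)).sub (Real.hasDerivAt_sinh y)
      convert h1 using 1; ring)
    (by simp) (fun y hy => by positivity) hx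
  linarith [show (0:ℝ) ≤ x * Real.cosh x - Real.sinh x from h]

lemma mul_cosh_sub_sinh_le {x : ℝ} (hx : 0 ≤ x) :
    x * Real.cosh x - Real.sinh x ≤ (x^3/2) * Real.cosh x := by
  have h := nonneg_of_deriv
    (fun x => (x^3/2) * Real.cosh x - (x * Real.cosh x - Real.sinh x))
    (fun x => (3*x^2/2) * Real.cosh x + (x^3/2) * Real.sinh x - x * Real.sinh x)
    (fun y => by
      have hcube : HasDerivAt (fun x : ℝ => x^3/2) (3*y^2/2) y := by
        have := (hasDerivAt_pow 3 y).div_const 2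
        simpa using this
      have h1 : HasDerivAt (fun x : ℝ => (x^3/2) * Real.cosh x - (x * Real.cosh x - Real.sinh x))
          ((3*y^2/2 * Real.cosh y + (y^3/2) * Real.sinh y) -
            ((1 * Real.cosh y + y * Real.sinh y) - Real.cosh y)) y :=
        (hcube.mul (Real.hasDerivAt_cosh y)).sub
          (((hasDerivAt_id y).mul (Real.hasDerivAt_cosh y)).sub (Real.hasDerivAt_sinh y))
      convert h1 using 1; ring)
    (by simp)
    (fun y hy => by
      have hs := sinh_le_mul_cosh hy
      have hsn : 0 ≤ Real.sinh y := Real.sinh_nonneg_iff.mpr hy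
      have hc := (Real.cosh_pos y).le
      show (0:ℝ) ≤ 3*y^2/2 * Real.cosh y + y^3/2 * Real.sinh y - y * Real.sinh y
      nlinarith [mul_le_mul_of_nonneg_left hs hy, mul_nonneg (mul_nonneg hy (mul_nonneg hy hy)) hsn,
        mul_nonneg (mul_nonneg hy hy) hc])
    hx
  linarith [show (0:ℝ) ≤ (x^3/2) * Real.cosh x - (x * Real.cosh x - Real.sinh x) from h]

lemma kFun_odd (u : ℝ) : kFun (-u) - 1 = -(kFun u - 1) := by
  rw [kFun_sub_one, kFun_sub_one]
  rw [show 2 * -u = -(2*u) by ring, Real.sinh_neg, Real.cosh_neg, neg_div]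

lemma ineqA_nonneg {u : ℝ} (hu : 0 ≤ u) : |kFun u - 1| ≤ min 1 |u| := by
  rw [kFun_sub_one, abs_of_nonneg hu]
  have hc := Real.cosh_pos (2*u)
  have hsn : 0 ≤ Real.sinh (2*u) := Real.sinh_nonneg_iff.mpr (by linarith)
  have hs := sinh_le_mul_cosh (show (0:ℝ) ≤ 2*u by linarith)
  have hlt : Real.sinh (2*u) ≤ Real.cosh (2*u) := by
    have := Real.cosh_sub_sinh (2*u)
    nlinarith [Real.exp_pos (-(2*u))]
  rw [abs_of_nonneg (div_nonneg hsn (by positivity))]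
  refine le_min ?_ ?_
  · rw [div_le_one (by positivity)]; nlinarith
  · rw [div_le_iff₀ (by positivity)]; nlinarith

lemma ineqB_nonneg {u : ℝ} (hu : 0 ≤ u) :
    |kFun u - 1 - u| ≤ 2 * |u| * min 1 (u ^ 2) := by
  rw [kFun_sub_one, abs_of_nonneg hu]
  have hc := Real.cosh_pos (2*u)
  have hsn : 0 ≤ Real.sinh (2*u) := Real.sinh_nonneg_iff.mpr (by linarith)
  have hs := sinh_le_mul_cosh (show (0:ℝ) ≤ 2*u by linarith)
  have hnp : Real.sinh (2*u) / (2 * Real.cosh (2*u)) - u ≤ 0 := by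
    rw [sub_nonpos, div_le_iff₀ (by positivity)]; nlinarith
  rw [abs_of_nonpos hnp, neg_sub]
  rcases le_total (u^2) 1 with h | h
  · rw [min_eq_right h]
    have h2 := mul_cosh_sub_sinh_le (show (0:ℝ) ≤ 2*u by linarith)
    have key : u - Real.sinh (2*u) / (2 * Real.cosh (2*u))
        = (2*u * Real.cosh (2*u) - Real.sinh (2*u)) / (2 * Real.cosh (2*u)) := by
      field_simp
    rw [key, div_le_iff₀ (by positivity)]
    nlinarith
  · rw [min_eq_left h]
    have : 0 ≤ Real.sinh (2*u) / (2 * Real.cosh (2*u)) := div_nonneg hsn (by positivity)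
    nlinarith [sq_nonneg u, (show (1:ℝ) ≤ u^2 from h)]

lemma hasDerivAt_kFun (u : ℝ) :
    HasDerivAt kFun (4 * Real.exp (-4*u) / (1 + Real.exp (-4*u))^2) u := by
  have h1 : (0:ℝ) < 1 + Real.exp (-4*u) := by positivity
  have hlin : HasDerivAt (fun u : ℝ => -4 * u) (-4) u := by
    simpa using (hasDerivAt_id u).const_mul (-4)
  have hexp : HasDerivAt (fun u : ℝ => Real.exp (-4*u)) (Real.exp (-4*u) * -4) u := hlin.exp
  have hden : HasDerivAt (fun u : ℝ => 1 + Real.exp (-4*u)) (Real.exp (-4*u) * -4) u :=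
    hexp.const_add 1
  have hinv := hden.inv (ne_of_gt h1)
  have := hinv.const_add (1/2 : ℝ)
  refine this.congr_deriv ?_
  ring

lemma deriv_kFun_eq : deriv kFun = fun u => 4 * Real.exp (-4*u) / (1 + Real.exp (-4*u))^2 :=
  funext fun u => (hasDerivAt_kFun u).deriv

/-- Basic properties of `k`: `k(0) = 1`, `k'(0) = 1`, `k''(0) = 0`, and for all `u`,
`|k(u) − 1| ≤ min(1, |u|)` and `|k(u) − 1 − u| ≤ 2|u| min(1, u²)`. -/
theorem kFun_properties :
    kFun 0 = 1 ∧
    deriv kFun 0 = 1 ∧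
    iteratedDeriv 2 kFun 0 = 0 ∧
    (∀ u : ℝ, |kFun u - 1| ≤ min 1 |u|) ∧
    (∀ u : ℝ, |kFun u - 1 - u| ≤ 2 * |u| * min 1 (u ^ 2)) := by
  refine ⟨?_, ?_, ?_, ?_, ?_⟩
  · simp [kFun]; norm_num
  · rw [(hasDerivAt_kFun 0).deriv]; norm_num
  · rw [iteratedDeriv_succ, iteratedDeriv_one, deriv_kFun_eq]
    have h1 : (0:ℝ) < 1 + Real.exp (-4*(0:ℝ)) := by positivity
    have hlin : HasDerivAt (fun u : ℝ => -4 * u) (-4) (0:ℝ) := by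
      simpa using (hasDerivAt_id (0:ℝ)).const_mul (-4)
    have hexp : HasDerivAt (fun u : ℝ => Real.exp (-4*u)) (Real.exp (-4*(0:ℝ)) * -4) 0 := hlin.exp
    have hnum : HasDerivAt (fun u : ℝ => 4 * Real.exp (-4*u)) (4 * (Real.exp (-4*(0:ℝ)) * -4)) 0 :=
      hexp.const_mul 4
    have hden : HasDerivAt (fun u : ℝ => 1 + Real.exp (-4*u)) (Real.exp (-4*(0:ℝ)) * -4) 0 :=
      hexp.const_add 1
    have hpow : HasDerivAt (fun u : ℝ => (1 + Real.exp (-4*u))^2)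
        (2 * (1 + Real.exp (-4*(0:ℝ)))^1 * (Real.exp (-4*(0:ℝ)) * -4)) 0 := by
      simpa using hden.fun_pow 2
    have hdiv := hnum.fun_div hpow (by positivity)
    rw [hdiv.deriv]
    norm_num
  · intro u
    rcases le_total 0 u with hu | hu
    · exact ineqA_nonneg hu
    · have h := ineqA_nonneg (show (0:ℝ) ≤ -u by linarith)
      rw [kFun_odd, abs_neg, abs_neg] at h
      exact h
  · intro u
    rcases le_total 0 u with hu | hu
    · exact ineqB_nonneg hu
    · have h := ineqB_nonneg (show (0:ℝ) ≤ -u by linarith)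
      rw [kFun_odd] at h
      have heq : |-(kFun u - 1) - -u| = |kFun u - 1 - u| := by
        rw [show -(kFun u - 1) - -u = -(kFun u - 1 - u) by ring, abs_neg]
      rw [heq, abs_neg, neg_pow] at h
      simpa using h
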